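/- Let S be a finite set, s₀ ∈ S, and a,b,c,d ∈ S−{s₀} distinct. Then in the polynomial ring R_S one has the identity R^S_{abcd} = R^S_{s₀adc} − R^S_{s₀adb}. Consequently, the collection of all elements R^S_{abcd} (a,b,c,d ∈ S, a≠b, c≠d) is contained in the ℤ-linear span of the subcollection of those with first index equal to s₀. -/
import Mathlib


open MvPolynomial Finset TensorProduct

noncomputable section

/-- `[ℓ] = {1, …, ℓ}`. -/
abbrev Iset (n : ℕ) : Finset ℕ := Finset.Icc 1 n

/-! ### The "complex" rings `R_S = R[(D_{J,K})_{{J,K} ∈ P•(S)}]`.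
An unordered pair `{J,K}` with `J ⊔ K = S` and `2 ≤ |J| ≤ |S|-2` is represented by
its unique member containing `min S`. -/

/-- Index type for the variables `D_{J,K}`, `{J,K} ∈ P•(S)`: the canonical member
of the pair is the one whose minimum is `min S`. -/
abbrev CxIdx (S : Finset ℕ) : Type :=
  {J : Finset ℕ // J ⊆ S ∧ 2 ≤ J.card ∧ 2 ≤ (S \ J).card ∧ J.min = S.min}

/-- The polynomial ring `R_S` on the variables `D_{J,K}`, `{J,K} ∈ P•(S)`. -/
abbrev CxRing (R : Type) [CommRing R] (S : Finset ℕ) : Type := MvPolynomial (CxIdx S) R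

def cxXv (R : Type) [CommRing R] (S J : Finset ℕ) : CxRing R S :=
  if h : J ⊆ S ∧ 2 ≤ J.card ∧ 2 ≤ (S \ J).card ∧ J.min = S.min then X ⟨J, h⟩ else 0

/-- The variable `D_{J,K}` of `R_S` (equal to `0` if `{J,K} ∉ P•(S)`). -/
def cxD (R : Type) [CommRing R] (S J K : Finset ℕ) : CxRing R S :=
  if Disjoint J K ∧ J ∪ K = S then (if J.min ≤ K.min then cxXv R S J else cxXv R S K)
  else 0

/-- `{J,K} ⋂̸ {J',K'}`:  `J ⊄ J'`, `J ⊄ K'`, `J' ⊄ J` and `K' ⊄ J`. -/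
abbrev NcapCx (J J' K' : Finset ℕ) : Prop :=
  ¬ J ⊆ J' ∧ ¬ J ⊆ K' ∧ ¬ J' ⊆ J ∧ ¬ K' ⊆ J

/-- The element `R^S_{abcd}`. -/
def cxRel (R : Type) [CommRing R] (S : Finset ℕ) (a b c d : ℕ) : CxRing R S :=
  (∑ J ∈ S.powerset,
    if 2 ≤ J.card ∧ 2 ≤ (S \ J).card ∧ a ∈ J ∧ b ∈ J ∧ c ∈ S \ J ∧ d ∈ S \ J
    then cxD R S J (S \ J) else 0)
  - ∑ J ∈ S.powerset,
    if 2 ≤ J.card ∧ 2 ≤ (S \ J).card ∧ a ∈ J ∧ c ∈ J ∧ b ∈ S \ J ∧ d ∈ S \ J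
    then cxD R S J (S \ J) else 0

/-- The ideal `I_S ⊂ R_S`. -/
def cxIdeal (R : Type) [CommRing R] (S : Finset ℕ) : Ideal (CxRing R S) :=
  Ideal.span (
    {x | ∃ J K J' K' : Finset ℕ,
      (Disjoint J K ∧ J ∪ K = S ∧ 2 ≤ J.card ∧ 2 ≤ K.card) ∧
      (Disjoint J' K' ∧ J' ∪ K' = S ∧ 2 ≤ J'.card ∧ 2 ≤ K'.card) ∧
      NcapCx J J' K' ∧ x = cxD R S J K * cxD R S J' K'} ∪
    {x | ∃ a b c d : ℕ, a ∈ S ∧ b ∈ S ∧ c ∈ S ∧ d ∈ S ∧ a ≠ b ∧ c ≠ d ∧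
      x = cxRel R S a b c d})

/-- The homomorphism `F : R_{[ℓ]} → R_{[ℓ+1]}`, `D_{J,K} ↦ D_{J∪{ℓ+1},K} + D_{J,K∪{ℓ+1}}`. -/
def Fcx (R : Type) [CommRing R] (ℓ : ℕ) : CxRing R (Iset ℓ) →ₐ[R] CxRing R (Iset (ℓ + 1)) :=
  aeval fun i =>
    cxD R (Iset (ℓ + 1)) (i.1 ∪ {ℓ + 1}) (Iset ℓ \ i.1)
    + cxD R (Iset (ℓ + 1)) i.1 ((Iset ℓ \ i.1) ∪ {ℓ + 1})

/-- The homomorphism `F_P : R_{{nd}⊔B} → R_{[ℓ]}`, `D_{J',K'} ↦ D_{P∪(J'-{nd}),K'}` for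
`nd ∈ J'`; here `nd = 0`. -/
def FJcx (R : Type) [CommRing R] (ℓ : ℕ) (P B : Finset ℕ) :
    CxRing R (insert 0 B) →ₐ[R] CxRing R (Iset ℓ) :=
  aeval fun i => cxD R (Iset ℓ) (P ∪ i.1.erase 0) (insert 0 B \ i.1)

/-- The homomorphism `F_{J,K} : R_{{nd}⊔J} ⊗ R_{{nd}⊔K} → R_{[ℓ]}` acting by `F_K` on the
first factor and by `F_J` on the second. -/
def FJKcx (R : Type) [CommRing R] (ℓ : ℕ) (J K : Finset ℕ) :
    TensorProduct R (CxRing R (insert 0 J)) (CxRing R (insert 0 K)) →ₐ[R] CxRing R (Iset ℓ) :=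
  Algebra.TensorProduct.productMap (FJcx R ℓ K J) (FJcx R ℓ J K)

/-- The submodule `A ⊗ I_B + I_A ⊗ B` of `A ⊗_R B`. -/
def mixedSub (R : Type) [CommRing R] {A B : Type} [CommRing A] [CommRing B]
    [Algebra R A] [Algebra R B] (IA : Ideal A) (IB : Ideal B) :
    Submodule R (TensorProduct R A B) :=
  Submodule.span R
    ({x | ∃ p q, q ∈ IB ∧ x = p ⊗ₜ[R] q} ∪ {x | ∃ p q, p ∈ IA ∧ x = p ⊗ₜ[R] q})

/-! ### The "real" rings `R_{0,S}` with variables `ℝE_{J,K}`, `{J,K} ∈ P(S)`, and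
`ℝD_{I;J,K}`, `(I,{J,K}) ∈ P̃•(S)`.  The unordered pair `{J,K}` is represented by
its member whose minimum equals the minimum of `J ∪ K`. -/

abbrev EIdx (S : Finset ℕ) : Type := {J : Finset ℕ // J ⊆ S ∧ J.min = S.min}

abbrev DIdx (S : Finset ℕ) : Type :=
  {p : Finset ℕ × Finset ℕ //
    p.1 ⊆ S ∧ p.2 ⊆ S \ p.1 ∧ 1 ≤ p.1.card ∧ 2 ≤ (S \ p.1).card ∧ p.2.min = (S \ p.1).min}

/-- The polynomial ring `R_{0,S}`. -/
abbrev RRing (R : Type) [CommRing R] (S : Finset ℕ) : Type :=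
  MvPolynomial (EIdx S ⊕ DIdx S) R

def reXe (R : Type) [CommRing R] (S J : Finset ℕ) : RRing R S :=
  if h : J ⊆ S ∧ J.min = S.min then X (Sum.inl ⟨J, h⟩) else 0

/-- The variable `ℝE_{J,K}` of `R_{0,S}` (equal to `0` if `{J,K} ∉ P(S)`). -/
def reE (R : Type) [CommRing R] (S J K : Finset ℕ) : RRing R S :=
  if Disjoint J K ∧ J ∪ K = S then (if J.min ≤ K.min then reXe R S J else reXe R S K)
  else 0

def reXd (R : Type) [CommRing R] (S I J : Finset ℕ) : RRing R S :=
  if h : I ⊆ S ∧ J ⊆ S \ I ∧ 1 ≤ I.card ∧ 2 ≤ (S \ I).card ∧ J.min = (S \ I).min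
  then X (Sum.inr ⟨(I, J), h⟩) else 0

/-- The variable `ℝD_{I;J,K}` of `R_{0,S}` (equal to `0` if `(I,{J,K}) ∉ P̃•(S)`). -/
def reD (R : Type) [CommRing R] (S I J K : Finset ℕ) : RRing R S :=
  if Disjoint I (J ∪ K) ∧ Disjoint J K ∧ I ∪ (J ∪ K) = S then
    (if J.min ≤ K.min then reXd R S I J else reXd R S I K)
  else 0

/-- The sign `ε_{J,K}`: `1` if `min (J ∪ K) ∈ J` and `-1` otherwise. -/
def epsm (J K : Finset ℕ) : ℤ := if J.min ≤ K.min then 1 else -1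

/-- `{J,K} ⪯ {J',K'}`. -/
abbrev preceq (J K J' K' : Finset ℕ) : Prop := (J ⊆ J' ∧ K ⊆ K') ∨ (J ⊆ K' ∧ K ⊆ J')

/-- `{J,K} ∈ P(S)`. -/
abbrev validE (S J K : Finset ℕ) : Prop := Disjoint J K ∧ J ∪ K = S

/-- `(I,{J,K}) ∈ P̃•(S)`. -/
abbrev validD (S I J K : Finset ℕ) : Prop :=
  Disjoint I (J ∪ K) ∧ Disjoint J K ∧ I ∪ (J ∪ K) = S ∧ 1 ≤ I.card ∧ 2 ≤ (J ∪ K).card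

/-- The element `E^S_{abc}`. -/
def relE (R : Type) [CommRing R] (S : Finset ℕ) (a b c : ℕ) : RRing R S :=
  (∑ I ∈ S.powerset, ∑ J ∈ (S \ I).powerset,
    if 1 ≤ I.card ∧ 2 ≤ (S \ I).card ∧ a ∈ J ∧ b ∈ J ∧ c ∈ I
    then epsm J ((S \ I) \ J) • reD R S I J ((S \ I) \ J) else 0)
  - (∑ I ∈ S.powerset, ∑ J ∈ (S \ I).powerset,
    if 1 ≤ I.card ∧ 2 ≤ (S \ I).card ∧ a ∈ J ∧ c ∈ J ∧ b ∈ I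
    then epsm J ((S \ I) \ J) • reD R S I J ((S \ I) \ J) else 0)
  - ∑ I ∈ S.powerset, ∑ J ∈ (S \ I).powerset,
    if 1 ≤ I.card ∧ 2 ≤ (S \ I).card ∧ a ∈ I ∧ b ∈ J ∧ c ∈ (S \ I) \ J
    then epsm J ((S \ I) \ J) • reD R S I J ((S \ I) \ J) else 0

/-- The element `Σ_{{J,K} ∈ P(S)} ℝE_{J,K}`. -/
def relEsum (R : Type) [CommRing R] (S : Finset ℕ) : RRing R S :=
  ∑ J ∈ S.powerset.filter (fun J => J.min = S.min), reE R S J (S \ J)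

/-- The ideal `I_{0,S} ⊂ R_{0,S}`. -/
def reIdeal (R : Type) [CommRing R] (S : Finset ℕ) : Ideal (RRing R S) :=
  Ideal.span (
    {x | ∃ J K J' K' : Finset ℕ, validE S J K ∧ validE S J' K' ∧
      x = reE R S J K * reE R S J' K'} ∪
    {x | ∃ J K I' J' K' : Finset ℕ, validE S J K ∧ validD S I' J' K' ∧
      ¬ preceq J' K' J K ∧ x = reE R S J K * reD R S I' J' K'} ∪
    {x | ∃ I J K I' J' K' : Finset ℕ, validD S I J K ∧ validD S I' J' K' ∧
      ¬ preceq J K J' K' ∧ ¬ preceq J' K' J K ∧ ¬ J ∪ K ⊆ I' ∧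
      x = reD R S I J K * reD R S I' J' K'} ∪
    {relEsum R S} ∪
    {x | ∃ a b c : ℕ, a ∈ S ∧ b ∈ S ∧ c ∈ S ∧ a ≠ b ∧ a ≠ c ∧ b ≠ c ∧
      x = relE R S a b c})

/-- The element `G_{abc}` of Remark `RcM04rel_e2b2`. -/
def relG (R : Type) [CommRing R] (S : Finset ℕ) (a b c : ℕ) : RRing R S :=
  (∑ I ∈ S.powerset, ∑ J ∈ (S \ I).powerset,
    if 1 ≤ I.card ∧ 2 ≤ (S \ I).card ∧ a ∈ J ∧ b ∉ I ∧ c ∈ I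
    then epsm J ((S \ I) \ J) • reD R S I J ((S \ I) \ J) else 0)
  - ∑ I ∈ S.powerset, ∑ J ∈ (S \ I).powerset,
    if 1 ≤ I.card ∧ 2 ≤ (S \ I).card ∧ a ∈ J ∧ b ∈ I ∧ c ∉ I
    then epsm J ((S \ I) \ J) • reD R S I J ((S \ I) \ J) else 0

/-- The homomorphism `F : R_{0,[ℓ]} → R_{0,[ℓ+1]}`. -/
def Fre (R : Type) [CommRing R] (ℓ : ℕ) : RRing R (Iset ℓ) →ₐ[R] RRing R (Iset (ℓ + 1)) :=
  aeval fun ix =>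
    match ix with
    | Sum.inl e =>
        reE R (Iset (ℓ + 1)) (e.1 ∪ {ℓ + 1}) (Iset ℓ \ e.1)
        + reE R (Iset (ℓ + 1)) e.1 ((Iset ℓ \ e.1) ∪ {ℓ + 1})
    | Sum.inr d =>
        reD R (Iset (ℓ + 1)) (d.1.1 ∪ {ℓ + 1}) d.1.2 ((Iset ℓ \ d.1.1) \ d.1.2)
        + reD R (Iset (ℓ + 1)) d.1.1 (d.1.2 ∪ {ℓ + 1}) ((Iset ℓ \ d.1.1) \ d.1.2)
        + reD R (Iset (ℓ + 1)) d.1.1 d.1.2 (((Iset ℓ \ d.1.1) \ d.1.2) ∪ {ℓ + 1})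

/-- `ℝẼ⁰_{J,K} = ℝD_{{ℓ+1};J,K} ∈ R_{0,[ℓ+1]}`. -/
def reEt0 (R : Type) [CommRing R] (ℓ : ℕ) (J K : Finset ℕ) : RRing R (Iset (ℓ + 1)) :=
  reD R (Iset (ℓ + 1)) {ℓ + 1} J K

/-- `ℝẼ⁻_{J,K} = ℝE_{J,K∪{ℓ+1}} ∈ R_{0,[ℓ+1]}`. -/
def reEtm (R : Type) [CommRing R] (ℓ : ℕ) (J K : Finset ℕ) : RRing R (Iset (ℓ + 1)) :=
  reE R (Iset (ℓ + 1)) J (K ∪ {ℓ + 1})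

/-- `ℝD̃⁰_{I;J,K} ∈ R_{0,[ℓ+1]}` (for `(I,{J,K})` written with `min (J∪K) ∈ J`). -/
def reDt0 (R : Type) [CommRing R] (ℓ : ℕ) (I J K : Finset ℕ) : RRing R (Iset (ℓ + 1)) :=
  if 1 ∈ I then reD R (Iset (ℓ + 1)) I (J ∪ {ℓ + 1}) K
  else reD R (Iset (ℓ + 1)) (I ∪ {ℓ + 1}) J K

/-- `ℝD̃⁻_{I;J,K} = ℝD_{I;J,K∪{ℓ+1}} ∈ R_{0,[ℓ+1]}`. -/
def reDtm (R : Type) [CommRing R] (ℓ : ℕ) (I J K : Finset ℕ) : RRing R (Iset (ℓ + 1)) :=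
  reD R (Iset (ℓ + 1)) I J (K ∪ {ℓ + 1})

/-- The homomorphism `F_{J,K} : R^{cx}_{{nd}⊔[ℓ]} → R_{0,[ℓ]}`,
`D_{J',K'} ↦ (-1)^{|K|} ε_{J∩K',K∩K'} ℝD_{J'-{nd};J∩K',K∩K'}` for `nd ∈ J'`; here `nd = 0`. -/
def FJKre (R : Type) [CommRing R] (ℓ : ℕ) (J K : Finset ℕ) :
    CxRing R (insert 0 (Iset ℓ)) →ₐ[R] RRing R (Iset ℓ) :=
  aeval fun i =>
    ((-1 : ℤ) ^ K.card *
        epsm (J ∩ (insert 0 (Iset ℓ) \ i.1)) (K ∩ (insert 0 (Iset ℓ) \ i.1))) •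
      reD R (Iset ℓ) (i.1.erase 0)
        (J ∩ (insert 0 (Iset ℓ) \ i.1)) (K ∩ (insert 0 (Iset ℓ) \ i.1))

/-- The homomorphism `F²_{I;J,K} : R^{cx}_{{nd}⊔(J∪K)} → R_{0,[ℓ]}`,
`D_{J',K'} ↦ (-1)^{|K|} ε_{J∩K',K∩K'} ℝD_{I∪(J'-{nd});J∩K',K∩K'}` for `nd ∈ J'`;
here `nd = 0`. -/
def F2IJK (R : Type) [CommRing R] (ℓ : ℕ) (I J K : Finset ℕ) :
    CxRing R (insert 0 (J ∪ K)) →ₐ[R] RRing R (Iset ℓ) :=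
  aeval fun i =>
    ((-1 : ℤ) ^ K.card *
        epsm (J ∩ (insert 0 (J ∪ K) \ i.1)) (K ∩ (insert 0 (J ∪ K) \ i.1))) •
      reD R (Iset ℓ) (I ∪ i.1.erase 0)
        (J ∩ (insert 0 (J ∪ K) \ i.1)) (K ∩ (insert 0 (J ∪ K) \ i.1))

/-- `nd` for `{nd} ⊔ I`, identified with `min (ℤ⁺ - I)`. -/
def ndOf (I : Finset ℕ) : ℕ := sInf {n : ℕ | 0 < n ∧ n ∉ I}

/-- The homomorphism `F¹_{I;J,K} : R_{0,{nd}⊔I} → R_{0,[ℓ]}` with `nd = min (ℤ⁺ - I)`. -/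
def F1IJK (R : Type) [CommRing R] (ℓ : ℕ) (I J K : Finset ℕ) :
    RRing R (insert (ndOf I) I) →ₐ[R] RRing R (Iset ℓ) :=
  aeval fun ix =>
    match ix with
    | Sum.inl e =>
        if ndOf I ∈ e.1 then
          reE R (Iset ℓ) (J ∪ e.1.erase (ndOf I)) (K ∪ (insert (ndOf I) I \ e.1))
        else
          reE R (Iset ℓ) (J ∪ (insert (ndOf I) I \ e.1).erase (ndOf I)) (K ∪ e.1)
    | Sum.inr d =>
        if ndOf I ∈ d.1.1 then
          reD R (Iset ℓ) (d.1.1.erase (ndOf I) ∪ J ∪ K) d.1.2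
            ((insert (ndOf I) I \ d.1.1) \ d.1.2)
        else if ndOf I ∈ d.1.2 then
          reD R (Iset ℓ) d.1.1 (J ∪ d.1.2.erase (ndOf I))
            (K ∪ ((insert (ndOf I) I \ d.1.1) \ d.1.2))
        else
          reD R (Iset ℓ) d.1.1
            (J ∪ ((insert (ndOf I) I \ d.1.1) \ d.1.2).erase (ndOf I)) (K ∪ d.1.2)

/-- The homomorphism `F_{I;J,K} : R_{0,{nd}⊔I} ⊗ R^{cx}_{{nd}⊔(J∪K)} → R_{0,[ℓ]}`
induced by `F¹_{I;J,K}` and `F²_{I;J,K}`. -/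
def FIJK (R : Type) [CommRing R] (ℓ : ℕ) (I J K : Finset ℕ) :
    TensorProduct R (RRing R (insert (ndOf I) I)) (CxRing R (insert 0 (J ∪ K))) →ₐ[R]
      RRing R (Iset ℓ) :=
  Algebra.TensorProduct.productMap (F1IJK R ℓ I J K) (F2IJK R ℓ I J K)

section Stmt0Aux

lemma stmt0_mem_sdiff' {S J : Finset ℕ} {z : ℕ} (hz : z ∈ S) : z ∈ S \ J ↔ z ∉ J := by
  simp [Finset.mem_sdiff, hz]

lemma stmt0_not_mem_sdiff' {S J : Finset ℕ} {z : ℕ} (hz : z ∈ S) : z ∉ S \ J ↔ z ∈ J := by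
  simp [Finset.mem_sdiff, hz]

lemma stmt0_cxD_comm (S J K : Finset ℕ) : cxD ℤ S J K = cxD ℤ S K J := by
  unfold cxD
  by_cases h : Disjoint J K ∧ J ∪ K = S
  · have h' : Disjoint K J ∧ K ∪ J = S := ⟨h.1.symm, by rw [Finset.union_comm]; exact h.2⟩
    rw [if_pos h, if_pos h']
    rcases lt_trichotomy J.min K.min with hlt | heq | hgt
    · rw [if_pos hlt.le, if_neg (not_le.mpr hlt)]
    · rw [if_pos heq.le, if_pos heq.ge]
      by_cases hJ : J = ∅
      · have hK : K = ∅ := by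
          apply Finset.min_eq_top.mp
          rw [← heq, hJ]
          exact Finset.min_eq_top.mpr rfl
        rw [hJ, hK]
      · obtain ⟨m, hm⟩ := Finset.min_of_nonempty (Finset.nonempty_iff_ne_empty.mpr hJ)
        have hmJ : m ∈ J := Finset.mem_of_min hm
        have hmK : m ∈ K := Finset.mem_of_min (by rw [← heq]; exact hm)
        exact absurd hmK (Finset.disjoint_left.mp h.1 hmJ)
    · rw [if_neg (not_le.mpr hgt), if_pos hgt.le]
  · rw [if_neg h, if_neg (fun hc => h ⟨hc.1.symm, by rw [Finset.union_comm]; exact hc.2⟩)]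

lemma stmt0_cxD_card_zero {S J : Finset ℕ} (hJ : J ⊆ S)
    (h : ¬(2 ≤ J.card ∧ 2 ≤ (S \ J).card)) : cxD ℤ S J (S \ J) = 0 := by
  have hs : S \ (S \ J) = J := Finset.sdiff_sdiff_eq_self hJ
  unfold cxD cxXv
  rw [if_pos ⟨Finset.disjoint_sdiff, Finset.union_sdiff_of_subset hJ⟩]
  split
  · rw [dif_neg]
    tauto
  · rw [dif_neg]
    rw [hs]
    tauto

lemma stmt0_sum_powerset_compl {M : Type*} [AddCommMonoid M] (S : Finset ℕ)
    (f : Finset ℕ → M) : ∑ J ∈ S.powerset, f J = ∑ J ∈ S.powerset, f (S \ J) := by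
  refine Finset.sum_nbij' (fun J => S \ J) (fun J => S \ J) ?_ ?_ ?_ ?_ ?_
  · intro J hJ; exact Finset.mem_powerset.mpr (Finset.sdiff_subset)
  · intro J hJ; exact Finset.mem_powerset.mpr (Finset.sdiff_subset)
  · intro J hJ; exact Finset.sdiff_sdiff_eq_self (Finset.mem_powerset.mp hJ)
  · intro J hJ; exact Finset.sdiff_sdiff_eq_self (Finset.mem_powerset.mp hJ)
  · intro J hJ
    rw [Finset.sdiff_sdiff_eq_self (Finset.mem_powerset.mp hJ)]

lemma stmt0_half_sum (S : Finset ℕ) (s₀ x y z w : ℕ) (hs₀ : s₀ ∈ S)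
    (hx : x ∈ S) (hy : y ∈ S) (hz : z ∈ S) (hw : w ∈ S) :
    (∑ J ∈ S.powerset,
      if 2 ≤ J.card ∧ 2 ≤ (S \ J).card ∧ x ∈ J ∧ y ∈ J ∧ z ∈ S \ J ∧ w ∈ S \ J
      then cxD ℤ S J (S \ J) else 0)
    = (∑ J ∈ S.powerset,
        if s₀ ∈ J ∧ x ∈ J ∧ y ∈ J ∧ z ∉ J ∧ w ∉ J then cxD ℤ S J (S \ J) else 0)
      + ∑ J ∈ S.powerset,
        if s₀ ∈ J ∧ x ∉ J ∧ y ∉ J ∧ z ∈ J ∧ w ∈ J then cxD ℤ S J (S \ J) else 0 := by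
  have step1 : (∑ J ∈ S.powerset,
      if 2 ≤ J.card ∧ 2 ≤ (S \ J).card ∧ x ∈ J ∧ y ∈ J ∧ z ∈ S \ J ∧ w ∈ S \ J
      then cxD ℤ S J (S \ J) else 0)
      = ∑ J ∈ S.powerset,
        if x ∈ J ∧ y ∈ J ∧ z ∉ J ∧ w ∉ J then cxD ℤ S J (S \ J) else 0 := by
    refine Finset.sum_congr rfl fun J hJ => ?_
    have hJS : J ⊆ S := Finset.mem_powerset.mp hJ
    by_cases hcard : 2 ≤ J.card ∧ 2 ≤ (S \ J).card
    · refine if_congr ?_ rfl rfl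
      rw [stmt0_mem_sdiff' hz, stmt0_mem_sdiff' hw]
      constructor
      · rintro ⟨-, -, h1, h2, h3, h4⟩; exact ⟨h1, h2, h3, h4⟩
      · rintro ⟨h1, h2, h3, h4⟩; exact ⟨hcard.1, hcard.2, h1, h2, h3, h4⟩
    · rw [if_neg (fun hA => hcard ⟨hA.1, hA.2.1⟩), stmt0_cxD_card_zero hJS hcard, ite_self]
  rw [step1]
  have step2 : (∑ J ∈ S.powerset,
      if x ∈ J ∧ y ∈ J ∧ z ∉ J ∧ w ∉ J then cxD ℤ S J (S \ J) else 0)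
      = (∑ J ∈ S.powerset,
          if s₀ ∈ J ∧ x ∈ J ∧ y ∈ J ∧ z ∉ J ∧ w ∉ J then cxD ℤ S J (S \ J) else 0)
        + ∑ J ∈ S.powerset,
          if s₀ ∉ J ∧ x ∈ J ∧ y ∈ J ∧ z ∉ J ∧ w ∉ J then cxD ℤ S J (S \ J) else 0 := by
    rw [← Finset.sum_add_distrib]
    refine Finset.sum_congr rfl fun J hJ => ?_
    by_cases h0 : s₀ ∈ J <;> simp [h0]
  rw [step2]
  congr 1
  rw [stmt0_sum_powerset_compl S
    (fun J => if s₀ ∉ J ∧ x ∈ J ∧ y ∈ J ∧ z ∉ J ∧ w ∉ J then cxD ℤ S J (S \ J) else 0)]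
  refine Finset.sum_congr rfl fun J hJ => ?_
  have hJS : J ⊆ S := Finset.mem_powerset.mp hJ
  have hss : S \ (S \ J) = J := Finset.sdiff_sdiff_eq_self hJS
  have hD : cxD ℤ S (S \ J) (S \ (S \ J)) = cxD ℤ S J (S \ J) := by
    rw [hss, stmt0_cxD_comm]
  rw [hD]
  refine if_congr ?_ rfl rfl
  rw [stmt0_not_mem_sdiff' hs₀, stmt0_mem_sdiff' hx, stmt0_mem_sdiff' hy,
    stmt0_not_mem_sdiff' hz, stmt0_not_mem_sdiff' hw]

lemma stmt0_normal_form (S : Finset ℕ) (s₀ a b c d : ℕ) (hs₀ : s₀ ∈ S)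
    (ha : a ∈ S) (hb : b ∈ S) (hc : c ∈ S) (hd : d ∈ S) :
    cxRel ℤ S a b c d =
      ((∑ J ∈ S.powerset,
        if s₀ ∈ J ∧ a ∈ J ∧ b ∈ J ∧ c ∉ J ∧ d ∉ J then cxD ℤ S J (S \ J) else 0)
      + ∑ J ∈ S.powerset,
        if s₀ ∈ J ∧ a ∉ J ∧ b ∉ J ∧ c ∈ J ∧ d ∈ J then cxD ℤ S J (S \ J) else 0)
      - ((∑ J ∈ S.powerset,
        if s₀ ∈ J ∧ a ∈ J ∧ c ∈ J ∧ b ∉ J ∧ d ∉ J then cxD ℤ S J (S \ J) else 0)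
      + ∑ J ∈ S.powerset,
        if s₀ ∈ J ∧ a ∉ J ∧ c ∉ J ∧ b ∈ J ∧ d ∈ J then cxD ℤ S J (S \ J) else 0) := by
  unfold cxRel
  rw [stmt0_half_sum S s₀ a b c d hs₀ ha hb hc hd,
    stmt0_half_sum S s₀ a c b d hs₀ ha hc hb hd]

lemma stmt0_master (S : Finset ℕ) (s₀ a b c d : ℕ) (hs₀ : s₀ ∈ S)
    (ha : a ∈ S) (hb : b ∈ S) (hc : c ∈ S) (hd : d ∈ S) :
    cxRel ℤ S a b c d = cxRel ℤ S s₀ a d c - cxRel ℤ S s₀ a d b := by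
  rw [stmt0_normal_form S s₀ a b c d hs₀ ha hb hc hd,
    stmt0_normal_form S s₀ s₀ a d c hs₀ hs₀ ha hd hc,
    stmt0_normal_form S s₀ s₀ a d b hs₀ hs₀ ha hd hb]
  simp only [← Finset.sum_add_distrib, ← Finset.sum_sub_distrib]
  refine Finset.sum_congr rfl fun J hJ => ?_
  by_cases h0 : s₀ ∈ J <;> by_cases h1 : a ∈ J <;> by_cases h2 : b ∈ J <;>
    by_cases h3 : c ∈ J <;> by_cases h4 : d ∈ J <;>
      simp [h0, h1, h2, h3, h4] <;> ring

lemma stmt0_degen (S : Finset ℕ) (s₀ a b : ℕ) (hs₀ : s₀ ∈ S) (ha : a ∈ S) (hb : b ∈ S) :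
    cxRel ℤ S s₀ a b b = - cxRel ℤ S s₀ b a b := by
  have key : cxRel ℤ S s₀ a b b + cxRel ℤ S s₀ b a b = 0 := by
    rw [stmt0_normal_form S s₀ s₀ a b b hs₀ hs₀ ha hb hb,
      stmt0_normal_form S s₀ s₀ b a b hs₀ hs₀ hb ha hb]
    simp only [← Finset.sum_add_distrib, ← Finset.sum_sub_distrib]
    refine Finset.sum_eq_zero fun J hJ => ?_
    by_cases h0 : s₀ ∈ J <;> by_cases h1 : a ∈ J <;> by_cases h2 : b ∈ J <;>
      simp [h0, h1, h2] <;> ring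
  linear_combination key

lemma stmt0_degen0 (S : Finset ℕ) (s₀ a : ℕ) : cxRel ℤ S s₀ a s₀ s₀ = 0 := by
  unfold cxRel
  refine sub_eq_zero.mpr (Finset.sum_congr rfl fun J hJ => ?_)
  rw [if_neg, if_neg]
  · rintro ⟨-, -, h1, -, -, h2⟩
    exact (Finset.mem_sdiff.mp h2).2 h1
  · rintro ⟨-, -, h1, -, h2, -⟩
    exact (Finset.mem_sdiff.mp h2).2 h1

end Stmt0Aux

/-- The identity `R^S_{abcd} = R^S_{s₀adc} − R^S_{s₀adb}` and the consequence
that all the elements `R^S_{abcd}` lie in the ℤ-linear span of those with first index `s₀`. -/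
theorem stmt0 (S : Finset ℕ) (s₀ a b c d : ℕ)
    (hs₀ : s₀ ∈ S) (ha : a ∈ S) (hb : b ∈ S) (hc : c ∈ S) (hd : d ∈ S)
    (has : a ≠ s₀) (hbs : b ≠ s₀) (hcs : c ≠ s₀) (hds : d ≠ s₀)
    (hab : a ≠ b) (hac : a ≠ c) (had : a ≠ d) (hbc : b ≠ c) (hbd : b ≠ d) (hcd : c ≠ d) :
    cxRel ℤ S a b c d = cxRel ℤ S s₀ a d c - cxRel ℤ S s₀ a d b ∧
    ∀ a' b' c' d' : ℕ, a' ∈ S → b' ∈ S → c' ∈ S → d' ∈ S → a' ≠ b' → c' ≠ d' →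
      cxRel ℤ S a' b' c' d' ∈
        Submodule.span ℤ {x : CxRing ℤ S | ∃ b'' c'' d'' : ℕ,
          b'' ∈ S ∧ c'' ∈ S ∧ d'' ∈ S ∧ s₀ ≠ b'' ∧ c'' ≠ d'' ∧
          x = cxRel ℤ S s₀ b'' c'' d''} := by
  constructor
  · exact stmt0_master S s₀ a b c d hs₀ ha hb hc hd
  · intro a' b' c' d' ha' hb' hc' hd' hab' hcd'
    by_cases h1 : a' = s₀
    · subst h1
      exact Submodule.subset_span ⟨b', c', d', hb', hc', hd', hab', hcd', rfl⟩
    · rw [stmt0_master S s₀ a' b' c' d' hs₀ ha' hb' hc' hd']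
      refine Submodule.sub_mem _
        (Submodule.subset_span ⟨a', d', c', ha', hd', hc', Ne.symm h1, Ne.symm hcd', rfl⟩) ?_
      by_cases h2 : d' = b'
      · by_cases h3 : b' = s₀
        · rw [h2, h3, stmt0_degen0 S s₀ a']
          exact Submodule.zero_mem _
        · rw [h2, stmt0_degen S s₀ a' b' hs₀ ha' hb']
          exact Submodule.neg_mem _
            (Submodule.subset_span ⟨b', a', b', hb', ha', hb', Ne.symm h3, hab', rfl⟩)
      · exact Submodule.subset_span ⟨a', d', b', ha', hd', hb', Ne.symm h1, h2, rfl⟩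

end
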